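/- Let p be a prime and let G be a t.d.l.c. group which is compactly generated, i.e. generated as a group by a compact subset. If G admits a left-invariant normed ℚ_p-mean, then G is compact. -/

import Mathlib

open BoundedContinuousFunction

/-- The left translate of a bounded continuous function: `(leftTranslate 𝕂 g f) x = f (g⁻¹ * x)`. -/
noncomputable def leftTranslate {G : Type*} [Group G] [TopologicalSpace G] [IsTopologicalGroup G]
    (𝕂 : Type*) [NormedField 𝕂] (g : G) (f : G →ᵇ 𝕂) : G →ᵇ 𝕂 :=
  f.compContinuous ⟨fun x => g⁻¹ * x, continuous_mul_left g⁻¹⟩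

/-- `m` is a left-invariant normed `𝕂`-mean on `G`: a bounded (equivalently, continuous)
linear functional on the space of bounded continuous `𝕂`-valued functions on `G`, sending the
constant function `𝟙_G` to `1`, and invariant under left translation. -/
def IsInvariantMean (𝕂 : Type*) [NormedField 𝕂] (G : Type*) [Group G] [TopologicalSpace G]
    [IsTopologicalGroup G] (m : (G →ᵇ 𝕂) →ₗ[𝕂] 𝕂) : Prop :=
  (∃ C : ℝ, ∀ f : G →ᵇ 𝕂, ‖m f‖ ≤ C * ‖f‖) ∧
    m (BoundedContinuousFunction.const G (1 : 𝕂)) = 1 ∧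
    ∀ (g : G) (f : G →ᵇ 𝕂), m (leftTranslate 𝕂 g f) = m f

/-- The operator norm of the linear functional `m` is at most `C`. -/
def MeanNormLE (𝕂 : Type*) [NormedField 𝕂] (G : Type*) [Group G] [TopologicalSpace G]
    [IsTopologicalGroup G] (m : (G →ᵇ 𝕂) →ₗ[𝕂] 𝕂) (C : ℝ) : Prop :=
  ∀ f : G →ᵇ 𝕂, ‖m f‖ ≤ C * ‖f‖

open Pointwise Set

/-- van Dantzig's theorem: a t.d.l.c. group has a compact open subgroup. -/
lemma aux_exists_compact_open_subgroup {G : Type*} [Group G] [TopologicalSpace G]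
    [IsTopologicalGroup G] [LocallyCompactSpace G] [TotallyDisconnectedSpace G]
    [T2Space G] : ∃ U : Subgroup G, IsCompact (U : Set G) ∧ IsOpen (U : Set G) := by
  obtain ⟨Kc, hKc, hKn⟩ := exists_compact_mem_nhds (1 : G)
  have h1 : (1 : G) ∈ interior Kc := mem_interior_iff_mem_nhds.2 hKn
  obtain ⟨V, hV, h1V, hVsub⟩ :=
    loc_compact_Haus_tot_disc_of_zero_dim.mem_nhds_iff.1 (isOpen_interior.mem_nhds h1)
  have hVclopen : IsClopen V := hV
  have hVcomp : IsCompact V :=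
    hKc.of_isClosed_subset hVclopen.isClosed (hVsub.trans interior_subset)
  have key : ∀ x ∈ V, ∃ UT : Set G × Set G, IsOpen UT.1 ∧ IsOpen UT.2 ∧ x ∈ UT.1 ∧
      (1 : G) ∈ UT.2 ∧ UT.1 * UT.2 ⊆ V := by
    intro x hx
    have hc : (x, (1 : G)) ∈ (fun p : G × G => p.1 * p.2) ⁻¹' V := by simpa using hx
    obtain ⟨Ux, Tx, hU, hT, hxU, h1T, hsub⟩ :=
      isOpen_prod_iff.1 (continuous_mul.isOpen_preimage V hVclopen.isOpen) x 1 hc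
    exact ⟨(Ux, Tx), hU, hT, hxU, h1T,
      Set.mul_subset_iff.2 fun a ha b hb => hsub (Set.mk_mem_prod ha hb)⟩
  choose! UT hUo hTo hxU h1T hsub using key
  obtain ⟨t, htV, htcov⟩ := hVcomp.elim_nhds_subcover (fun x => (UT x).1)
    (fun x hx => ((hUo x hx).mem_nhds (hxU x hx)))
  set T0 : Set G := ⋂ x ∈ t, (UT x).2 with hT0
  have hT0open : IsOpen T0 := isOpen_biInter_finset fun x hx => hTo x (htV x hx)
  have h1T0 : (1 : G) ∈ T0 := mem_biInter fun x hx => h1T x (htV x hx)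
  have hVT0 : V * T0 ⊆ V := by
    rw [Set.mul_subset_iff]
    intro a ha b hb
    obtain ⟨x, hxt, hax⟩ := Set.mem_iUnion₂.1 (htcov ha)
    exact hsub x (htV x hxt) (Set.mul_mem_mul hax (Set.mem_iInter₂.1 hb x hxt))
  set T1 : Set G := T0 ∩ V with hT1
  set T : Set G := T1 ∩ T1⁻¹ with hT
  have hTopen : IsOpen T := ((hT0open.inter hVclopen.isOpen).inter
    (hT0open.inter hVclopen.isOpen).inv)
  have h1T' : (1 : G) ∈ T := ⟨⟨h1T0, h1V⟩, by rw [Set.mem_inv, inv_one]; exact ⟨h1T0, h1V⟩⟩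
  have hTsymm : T⁻¹ = T := by
    rw [hT, Set.inter_inv, inv_inv, Set.inter_comm]
  have hTV : T ⊆ V := fun a ha => ha.1.2
  have hVT : V * T ⊆ V := fun a ha => by
    obtain ⟨b, hb, c, hc, rfl⟩ := ha
    exact hVT0 (Set.mul_mem_mul hb hc.1.1)
  have hTpowV : ∀ n : ℕ, T ^ (n + 1) ⊆ V := by
    intro n
    induction n with
    | zero => simpa using hTV
    | succ n ih =>
        rw [pow_succ]
        exact (Set.mul_subset_mul_right ih).trans hVT
  set S : Subgroup G :=
    { carrier := ⋃ n : ℕ, T ^ (n + 1)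
      mul_mem' := by
        intro a b ha hb
        rcases mem_iUnion.mp ha with ⟨k, hk⟩
        rcases mem_iUnion.mp hb with ⟨l, hl⟩
        apply mem_iUnion.mpr
        refine ⟨k + 1 + l, ?_⟩
        rw [add_assoc, pow_add]
        exact Set.mul_mem_mul hk hl
      one_mem' := mem_iUnion.mpr ⟨0, by simpa using h1T'⟩
      inv_mem' := by
        intro a ha
        rcases mem_iUnion.mp ha with ⟨k, hk⟩
        apply mem_iUnion.mpr
        refine ⟨k, ?_⟩
        rw [← hTsymm]
        simpa only [inv_pow, Set.mem_inv, inv_inv] using hk } with hS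
  have hSopen : IsOpen (S : Set G) := by
    refine isOpen_iUnion fun n => ?_
    rw [pow_succ]
    exact hTopen.mul_left
  have hSsubV : (S : Set G) ⊆ V := iUnion_subset fun n => hTpowV n
  exact ⟨S, hVcomp.of_isClosed_subset (S.isClosed_of_isOpen hSopen) hSsubV, hSopen⟩

/-- Transport lemma: a difference of delta functions along the orbit of the subgroup generated
by `F` is a finite sum of translation-coboundaries. -/
lemma aux_transport {G : Type*} [Group G] {X : Type*} [MulAction G X] [DecidableEq X]
    (F : Finset G) {R : Type*} [CommRing R] {h : G} (hh : h ∈ Subgroup.closure (F : Set G)) :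
    ∀ x : X, ∃ β : F → X → R,
      ∀ x' : X, (∑ i : F, (β i ((i : G)⁻¹ • x') - β i x'))
        = (if x' = x then 1 else 0) - (if x' = h • x then 1 else 0) := by
  classical
  induction hh using Subgroup.closure_induction with
  | mem g hg =>
      intro x
      refine ⟨fun i x' => if i = (⟨g, hg⟩ : F) then (if x' = x then (-1 : R) else 0) else 0,
        fun x' => ?_⟩
      rw [Finset.sum_eq_single (⟨g, hg⟩ : F)]
      · show (if (⟨g, hg⟩ : F) = (⟨g, hg⟩ : F) then (if g⁻¹ • x' = x then (-1 : R) else 0) else 0)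
            - (if (⟨g, hg⟩ : F) = (⟨g, hg⟩ : F) then (if x' = x then (-1 : R) else 0) else 0)
            = (if x' = x then 1 else 0) - (if x' = g • x then 1 else 0)
        rw [if_pos rfl, if_pos rfl, if_congr (inv_smul_eq_iff (g := g)) rfl rfl]
        split_ifs <;> ring
      · intro b _ hb
        simp [hb]
      · simp
  | one =>
      intro x
      exact ⟨0, fun x' => by simp [one_smul]⟩
  | mul g₁ g₂ hg₁ hg₂ ih₁ ih₂ =>
      intro x
      obtain ⟨β₂, hβ₂⟩ := ih₂ x
      obtain ⟨β₁, hβ₁⟩ := ih₁ (g₂ • x)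
      refine ⟨β₁ + β₂, fun x' => ?_⟩
      rw [show (∑ i : F, ((β₁ + β₂) i ((i : G)⁻¹ • x') - (β₁ + β₂) i x'))
          = (∑ i : F, (β₁ i ((i : G)⁻¹ • x') - β₁ i x'))
            + (∑ i : F, (β₂ i ((i : G)⁻¹ • x') - β₂ i x')) by
        rw [← Finset.sum_add_distrib]
        apply Finset.sum_congr rfl
        intros
        simp only [Pi.add_apply]
        ring]
      rw [hβ₁ x', hβ₂ x', mul_smul]
      ring
  | inv g hg ih =>
      intro x
      obtain ⟨β, hβ⟩ := ih (g⁻¹ • x)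
      refine ⟨-β, fun x' => ?_⟩
      have h1 := hβ x'
      rw [smul_inv_smul] at h1
      rw [show (∑ i : F, ((-β) i ((i : G)⁻¹ • x') - (-β) i x'))
          = -(∑ i : F, (β i ((i : G)⁻¹ • x') - β i x')) by
        rw [← Finset.sum_neg_distrib]
        apply Finset.sum_congr rfl
        intros
        simp only [Pi.neg_apply]
        ring]
      rw [h1]
      ring

/-- Any function through an open quotient is continuous. -/
lemma aux_continuous_of_quotient {G : Type*} [Group G] [TopologicalSpace G] [IsTopologicalGroup G]
    (U : Subgroup G) (hUopen : IsOpen (U : Set G)) {Y : Type*} [TopologicalSpace Y]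
    (γ : G ⧸ U → Y) : Continuous (fun g : G => γ (g : G ⧸ U)) := by
  rw [continuous_def]
  intro s _
  refine isOpen_iff_mem_nhds.2 fun a ha => ?_
  have hsub : (a • (U : Set G)) ⊆ (fun g : G => γ (g : G ⧸ U)) ⁻¹' s := by
    rintro b ⟨u, hu, rfl⟩
    have : ((a * u : G) : G ⧸ U) = (a : G ⧸ U) := by
      rw [QuotientGroup.eq]
      simpa using U.inv_mem hu
    simpa [this] using ha
  exact Filter.mem_of_superset
    ((hUopen.smul a).mem_nhds ⟨1, U.one_mem, mul_one a⟩) hsub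

/-- A compactly generated t.d.l.c. group admitting a left-invariant normed
`ℚ_p`-mean is compact. -/
theorem compact_of_compactlyGenerated_invariantMean (p : ℕ) [Fact p.Prime]
    (G : Type*) [Group G] [TopologicalSpace G] [IsTopologicalGroup G]
    [LocallyCompactSpace G] [TotallyDisconnectedSpace G] [T2Space G]
    (K : Set G) (hK : IsCompact K) (hgen : Subgroup.closure K = ⊤)
    (h : ∃ m : (G →ᵇ ℚ_[p]) →ₗ[ℚ_[p]] ℚ_[p], IsInvariantMean ℚ_[p] G m) :
    CompactSpace G := by
  classical
  obtain ⟨m, hmean⟩ := h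
  obtain ⟨-, hone, hinv⟩ := hmean
  obtain ⟨U, hUcomp, hUopen⟩ := aux_exists_compact_open_subgroup (G := G)
  -- the compact open symmetric generating set `D`
  set K' : Set G := (K ∪ K⁻¹) ∪ {1} with hK'def
  have hK'comp : IsCompact K' := (hK.union hK.inv).union isCompact_singleton
  have hK'symm : K'⁻¹ = K' := by
    rw [hK'def, Set.union_inv, Set.union_inv, inv_inv, Set.inv_singleton, inv_one,
      Set.union_comm K⁻¹ K]
  set D : Set G := (U : Set G) * K' * (U : Set G) with hDdef
  have hDcomp : IsCompact D := (hUcomp.mul hK'comp).mul hUcomp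
  have hDopen : IsOpen D := hUopen.mul_left
  have h1K' : (1:G) ∈ K' := Or.inr rfl
  have h1D : (1:G) ∈ D := by
    have h : (1:G) = 1 * 1 * 1 := by group
    rw [h]
    exact Set.mul_mem_mul (Set.mul_mem_mul U.one_mem h1K') U.one_mem
  have hKD : K ⊆ D := by
    intro k hk
    have h : k = 1 * k * 1 := by group
    rw [h]
    exact Set.mul_mem_mul (Set.mul_mem_mul U.one_mem (Or.inl (Or.inl hk))) U.one_mem
  have hDsymm : D⁻¹ = D := by
    rw [hDdef, mul_inv_rev, mul_inv_rev, inv_coe_set, hK'symm, ← mul_assoc]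
  -- every element lies in some power of D
  have hcov : ∀ x : G, ∃ n : ℕ, x ∈ D ^ (n + 1) := by
    intro x
    have hx : x ∈ Subgroup.closure K := by rw [hgen]; trivial
    induction hx using Subgroup.closure_induction with
    | mem g hgK => exact ⟨0, by simpa [pow_one] using hKD hgK⟩
    | one => exact ⟨0, by simpa [pow_one] using h1D⟩
    | mul g₁ g₂ _ _ ih₁ ih₂ =>
        obtain ⟨n₁, h₁⟩ := ih₁
        obtain ⟨n₂, h₂⟩ := ih₂
        refine ⟨n₁ + n₂ + 1, ?_⟩
        have he : (n₁ + n₂ + 1) + 1 = (n₁ + 1) + (n₂ + 1) := by ring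
        rw [he, pow_add]
        exact Set.mul_mem_mul h₁ h₂
    | inv g _ ih =>
        obtain ⟨n, h₁⟩ := ih
        have hpows : (D ^ (n + 1))⁻¹ = D ^ (n + 1) := by rw [← inv_pow, hDsymm]
        refine ⟨n, ?_⟩
        rw [← hpows]
        exact Set.inv_mem_inv.2 h₁
  -- finite subcover of D * D by translates of D
  obtain ⟨Fc, hFcD, hFccov⟩ := (hDcomp.mul hDcomp).elim_nhds_subcover (fun g => g • D)
    (fun x _ => (hDopen.smul x).mem_nhds ⟨1, h1D, mul_one x⟩)
  set H : Subgroup G := Subgroup.closure (Fc : Set G) with hHdef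
  have hHD : ∀ n : ℕ, D ^ (n + 1) ⊆ (H : Set G) * D := by
    intro n
    induction n with
    | zero =>
        intro x hx
        exact ⟨1, H.one_mem, x, by simpa using hx, one_mul x⟩
    | succ n ih =>
        rw [pow_succ]
        intro x hx
        obtain ⟨y, hy, d, hd, rfl⟩ := hx
        obtain ⟨hh, hhH, d', hd', rfl⟩ := ih hy
        have hdd : d' * d ∈ D * D := Set.mul_mem_mul hd' hd
        obtain ⟨g, hgFc, hmem⟩ := Set.mem_iUnion₂.1 (hFccov hdd)
        obtain ⟨d'', hd'', heq⟩ := hmem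
        refine ⟨hh * g, H.mul_mem hhH (Subgroup.subset_closure hgFc), d'', hd'', ?_⟩
        show hh * g * d'' = hh * d' * d
        rw [mul_assoc, show g * d'' = d' * d from heq, ← mul_assoc]
  by_cases hfin : ∀ x : G ⧸ U, (MulAction.orbit H x).Infinite
  · -- all orbits infinite : contradiction with the invariant mean
    exfalso
    -- a global solution of the transport equation, by compactness
    set T : Finset (G ⧸ U) → Set (Fc → (G ⧸ U) → ℤ_[p]) := fun Y =>
      {β | ∀ x ∈ Y, (∑ i : Fc, (β i ((i : G)⁻¹ • x) - β i x)) = 1} with hT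
    have hTne : ∀ Y, (T Y).Nonempty := by
      intro Y
      have hch : ∀ x₀ : G ⧸ U, ∃ z : G ⧸ U, z ∉ Y ∧ ∃ β : Fc → (G ⧸ U) → ℤ_[p],
          ∀ x' : G ⧸ U, (∑ i : Fc, (β i ((i : G)⁻¹ • x') - β i x'))
            = (if x' = x₀ then 1 else 0) - (if x' = z then 1 else 0) := by
        intro x₀
        obtain ⟨z, hzorb, hznY⟩ := Set.Infinite.exists_notMem_finset (hfin x₀) Y
        obtain ⟨hz, hzeq⟩ := hzorb
        obtain ⟨β, hβ⟩ := aux_transport Fc (R := ℤ_[p]) (h := (hz : G)) hz.2 x₀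
        refine ⟨z, hznY, β, fun x' => ?_⟩
        rw [hβ x']
        rw [show (hz : G) • x₀ = z from hzeq]
      choose z hzY β hβ using hch
      refine ⟨∑ x₀ ∈ Y, β x₀, ?_⟩
      intro x hxY
      have hswap : (∑ i : Fc, ((∑ x₀ ∈ Y, β x₀) i ((i : G)⁻¹ • x) - (∑ x₀ ∈ Y, β x₀) i x))
          = ∑ x₀ ∈ Y, (∑ i : Fc, (β x₀ i ((i : G)⁻¹ • x) - β x₀ i x)) := by
        rw [Finset.sum_comm]
        apply Finset.sum_congr rfl
        intro i _
        simp only [Finset.sum_apply]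
        rw [← Finset.sum_sub_distrib]
      rw [hswap]
      have : ∀ x₀ ∈ Y, (∑ i : Fc, (β x₀ i ((i : G)⁻¹ • x) - β x₀ i x))
          = (if x = x₀ then 1 else 0) := by
        intro x₀ _
        rw [hβ x₀ x,
          if_neg (show ¬x = z x₀ from fun hxz => hzY x₀ (hxz ▸ hxY)), sub_zero]
      rw [Finset.sum_congr rfl this, Finset.sum_ite_eq Y x (fun _ => (1 : ℤ_[p])), if_pos hxY]
    have hdir : Directed (· ⊇ ·) T := by
      intro Y₁ Y₂
      exact ⟨Y₁ ∪ Y₂, fun β hβ x hx => hβ x (Finset.mem_union_left _ hx),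
        fun β hβ x hx => hβ x (Finset.mem_union_right _ hx)⟩
    have hTclosed : ∀ Y, IsClosed (T Y) := by
      intro Y
      have hrw : T Y = ⋂ x ∈ Y, {β : Fc → (G ⧸ U) → ℤ_[p] |
          (∑ i : Fc, (β i ((i : G)⁻¹ • x) - β i x)) = 1} := by
        ext β
        simp [hT]
      rw [hrw]
      refine isClosed_biInter fun x _ => isClosed_eq ?_ continuous_const
      exact continuous_finset_sum _ fun i _ => by fun_prop
    obtain ⟨β, hβall⟩ := IsCompact.nonempty_iInter_of_directed_nonempty_isCompact_isClosed
      T hdir hTne (fun Y => (hTclosed Y).isCompact) hTclosed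
    have hβ : ∀ x : G ⧸ U, (∑ i : Fc, (β i ((i : G)⁻¹ • x) - β i x)) = 1 := by
      intro x
      exact (Set.mem_iInter.1 hβall {x}) x (Finset.mem_singleton_self x)
    -- the bounded continuous functions
    set f : Fc → (G →ᵇ ℚ_[p]) := fun i =>
      BoundedContinuousFunction.ofNormedAddCommGroup
        (fun g : G => ((β i ((g : G ⧸ U)) : ℤ_[p]) : ℚ_[p]))
        (aux_continuous_of_quotient U hUopen (fun q => ((β i q : ℤ_[p]) : ℚ_[p])))
        1 (fun g => le_trans (le_of_eq (PadicInt.padic_norm_e_of_padicInt _))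
          (PadicInt.norm_le_one _)) with hf
    have hsum : (∑ i : Fc, (leftTranslate ℚ_[p] (i : G) (f i) - f i))
        = BoundedContinuousFunction.const G (1 : ℚ_[p]) := by
      ext g
      have h2 := congrArg (PadicInt.Coe.ringHom (p := p)) (hβ (QuotientGroup.mk g))
      rw [map_sum, map_one] at h2
      simp only [map_sub] at h2
      simp only [BoundedContinuousFunction.coe_sum, Finset.sum_apply,
        BoundedContinuousFunction.coe_sub, Pi.sub_apply,
        BoundedContinuousFunction.const_apply, leftTranslate, hf,
        BoundedContinuousFunction.coe_compContinuous,
        BoundedContinuousFunction.coe_ofNormedAddCommGroup, ContinuousMap.coe_mk,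
        Function.comp_apply]
      rw [← h2]
      apply Finset.sum_congr rfl
      intro i _
      have hq : (((i : G)⁻¹ * g : G) : G ⧸ U) = (i : G)⁻¹ • (g : G ⧸ U) := by
        rw [← smul_eq_mul]
        exact (MulAction.Quotient.smul_mk U _ g).symm
      rw [hq]
      rfl
    have hm0 : m (∑ i : Fc, (leftTranslate ℚ_[p] (i : G) (f i) - f i)) = 0 := by
      rw [map_sum]
      refine Finset.sum_eq_zero fun i _ => ?_
      rw [map_sub, hinv (i : G) (f i), sub_self]
    rw [hsum, hone] at hm0
    exact one_ne_zero hm0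
  · -- some orbit is finite : the group is compact
    push_neg at hfin
    obtain ⟨x₀, hx₀inf⟩ := hfin
    obtain ⟨g₀, rfl⟩ := QuotientGroup.mk_surjective x₀
    have hpre : ∀ y : G ⧸ U, IsCompact ((QuotientGroup.mk : G → G ⧸ U) ⁻¹' {y}) := by
      intro y
      obtain ⟨a, rfl⟩ := QuotientGroup.mk_surjective y
      have hrw : (QuotientGroup.mk : G → G ⧸ U) ⁻¹' {QuotientGroup.mk a} = a • (U : Set G) := by
        ext b
        simp only [Set.mem_preimage, Set.mem_singleton_iff]
        rw [QuotientGroup.eq, Set.mem_smul_set_iff_inv_smul_mem, smul_eq_mul]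
        constructor
        · intro hb; simpa [mul_inv_rev] using U.inv_mem hb
        · intro hb; simpa [mul_inv_rev] using U.inv_mem hb
      rw [hrw, ← Set.image_smul]
      exact hUcomp.image (continuous_const_smul a)
    have horb : ∀ h : G, h ∈ H →
        ((h * g₀ : G) : G ⧸ U) ∈ MulAction.orbit H ((g₀ : G) : G ⧸ U) := by
      intro h hh
      refine ⟨⟨h, hh⟩, ?_⟩
      show (h : G) • ((g₀ : G) : G ⧸ U) = _
      rw [← smul_eq_mul]
      exact MulAction.Quotient.smul_mk U h g₀
    set Φ : Set G := ⋃ y ∈ MulAction.orbit H ((g₀ : G) : G ⧸ U),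
      ((QuotientGroup.mk : G → G ⧸ U) ⁻¹' {y}) with hΦ
    have hΦcomp : IsCompact Φ := hx₀inf.isCompact_biUnion (fun y _ => hpre y)
    have hGsub : (Set.univ : Set G) ⊆ Φ * ({g₀⁻¹} * D) := by
      intro x _
      obtain ⟨n, hxn⟩ := hcov x
      obtain ⟨hh, hhH, d, hd, rfl⟩ := hHD n hxn
      refine ⟨hh * g₀, Set.mem_biUnion (horb hh hhH) rfl,
        g₀⁻¹ * d, ⟨g₀⁻¹, rfl, d, hd, rfl⟩, by group⟩
    exact ⟨(hΦcomp.mul (isCompact_singleton.mul hDcomp)).of_isClosed_subset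
      isClosed_univ hGsub⟩
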